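/- Let f : ℝⁿ → ℝ be convex attaining its minimum f⋆ at x⋆, and let G : ℝⁿ × ℝⁿ → ℝⁿ be a directional subgradient of f, i.e., for all x, p: G(x,p) ∈ ∂f(x) and ⟨G(x,p), p⟩ = sup_{ξ ∈ ∂f(x)} ⟨ξ, p⟩. Suppose that for some α > 0 there is a curve X : [0,α) → ℝⁿ, continuously differentiable on [0,α) and twice differentiable on (0,α), satisfying Ẍ(t) + (3/t)Ẋ(t) + G(X(t), Ẋ(t)) = 0 for 0 < t < α, with X(0) = x₀ and Ẋ(0) = 0. Then for every 0 < t < α, f(X(t)) − f⋆ ≤ 2‖x₀ − x⋆‖²/t². -/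

import Mathlib

open Set Filter Topology

noncomputable section

abbrev E (n : ℕ) := EuclideanSpace ℝ (Fin n)

/-- `ξ` is a subgradient of the convex function `f` at `x`:
`f(y) ≥ f(x) + ⟨ξ, y - x⟩` for all `y`. -/
def IsSubgradientAt (n : ℕ) (f : E n → ℝ) (x ξ : E n) : Prop :=
  ∀ y, f x + (inner ℝ ξ (y - x) : ℝ) ≤ f y

/-- `G` is a directional subgradient of `f`: for all `x, p`, `G(x,p) ∈ ∂f(x)` and
`⟨G(x,p), p⟩ = sup_{ξ ∈ ∂f(x)} ⟨ξ, p⟩` (the sup is attained at `G(x,p)`). -/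
def IsDirectionalSubgradient (n : ℕ) (f : E n → ℝ) (G : E n → E n → E n) : Prop :=
  ∀ x p, IsSubgradientAt n f x (G x p) ∧
    ∀ ξ, IsSubgradientAt n f x ξ → (inner ℝ ξ p : ℝ) ≤ (inner ℝ (G x p) p : ℝ)

/-- A solution on `[0,α)` of the non-smooth ODE `Ẍ + (3/t)Ẋ + G(X, Ẋ) = 0`, `X(0) = x₀`,
`Ẋ(0) = 0`: C¹ on `[0,α)`, twice differentiable on `(0,α)`. -/
def NonsmoothNesterovSol (n : ℕ) (G : E n → E n → E n) (x0 : E n) (α : ℝ)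
    (X : ℝ → E n) : Prop :=
  X 0 = x0 ∧
  ContDiffOn ℝ 1 X (Set.Ico 0 α) ∧
  derivWithin X (Set.Ico 0 α) 0 = 0 ∧
  ∀ t ∈ Set.Ioo (0:ℝ) α,
    DifferentiableAt ℝ (deriv X) t ∧
    deriv (deriv X) t + (3 / t) • deriv X t + G (X t) (deriv X t) = 0

lemma subgrad_norm_bound {n : ℕ} {f : E n → ℝ} (fcont : Continuous f) (x : E n) :
    ∃ K : ℝ, ∀ y ∈ Metric.closedBall x 1, ∀ ξ, IsSubgradientAt n f y ξ → ‖ξ‖ ≤ K := by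
  obtain ⟨zM, hzM, hM⟩ := (isCompact_closedBall x 2).exists_isMaxOn
    ⟨x, Metric.mem_closedBall_self (by norm_num)⟩ fcont.continuousOn
  obtain ⟨zm, hzm, hm⟩ := (isCompact_closedBall x 2).exists_isMinOn
    ⟨x, Metric.mem_closedBall_self (by norm_num)⟩ fcont.continuousOn
  have hsub : Metric.closedBall x 1 ⊆ Metric.closedBall x 2 :=
    Metric.closedBall_subset_closedBall (by norm_num)
  refine ⟨f zM - f zm, fun y hy ξ hξ => ?_⟩
  rcases eq_or_ne ξ 0 with rfl | hξ0
  · simp only [norm_zero, sub_nonneg]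
    exact (hm (hsub hy)).trans (hM (hsub hy))
  · have hn : (0:ℝ) < ‖ξ‖ := norm_pos_iff.2 hξ0
    set z := y + ‖ξ‖⁻¹ • ξ with hz
    have hzball : z ∈ Metric.closedBall x 2 := by
      have : dist z y = 1 := by
        simp [hz, dist_eq_norm, norm_smul, abs_of_nonneg (inv_nonneg.2 hn.le),
          inv_mul_cancel₀ hn.ne']
      calc dist z x ≤ dist z y + dist y x := dist_triangle _ _ _
        _ ≤ 1 + 1 := by
            rw [this]
            exact add_le_add le_rfl (Metric.mem_closedBall.1 hy)
        _ ≤ 2 := by norm_num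
    have h1 := hξ z
    have h2 : (inner ℝ ξ (z - y) : ℝ) = ‖ξ‖ := by
      simp only [hz, add_sub_cancel_left]
      rw [real_inner_smul_right, real_inner_self_eq_norm_sq]
      field_simp
    have h3 : f z ≤ f zM := hM hzball
    have h4 : f zm ≤ f y := hm (hsub hy)
    rw [h2] at h1
    linarith

/-- slope inequality from a subgradient -/
lemma slope_le_of_subgrad {n : ℕ} {f : E n → ℝ} {X : ℝ → E n} {s z : ℝ} (hz : s < z)
    {ξ : E n} (hξ : IsSubgradientAt n f (X z) ξ) :
    slope (fun t => f (X t)) s z ≤ (inner ℝ ξ (slope X s z) : ℝ) := by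
  have h1 := hξ (X s)
  have heq : (inner ℝ ξ (X s - X z) : ℝ) = - inner ℝ ξ (X z - X s) := by
    rw [← inner_neg_right]; congr 1; abel
  rw [heq] at h1
  have hpos : (0:ℝ) ≤ (z - s)⁻¹ := inv_nonneg.2 (by linarith)
  have : slope (fun t => f (X t)) s z = (z - s)⁻¹ * (f (X z) - f (X s)) := by
    rw [slope_def_field]; ring
  rw [this, slope_def_module, real_inner_smul_right]
  exact mul_le_mul_of_nonneg_left (by linarith) hpos

lemma subgrad_slope_le {n : ℕ} {f : E n → ℝ} {X : ℝ → E n} {s z : ℝ} (hz : s < z)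
    {ξ : E n} (hξ : IsSubgradientAt n f (X s) ξ) :
    (inner ℝ ξ (slope X s z) : ℝ) ≤ slope (fun t => f (X t)) s z := by
  have h1 := hξ (X z)
  have hpos : (0:ℝ) ≤ (z - s)⁻¹ := inv_nonneg.2 (by linarith)
  have heq : slope (fun t => f (X t)) s z = (z - s)⁻¹ * (f (X z) - f (X s)) := by
    rw [slope_def_field]; ring
  rw [heq, slope_def_module, real_inner_smul_right]
  exact mul_le_mul_of_nonneg_left (by linarith) hpos

/-- The right derivative of `f ∘ X` equals `⟨G(X s, v), v⟩` where `v = Ẋ(s)`. -/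
lemma slope_comp_tendsto {n : ℕ} {f : E n → ℝ} (fcont : Continuous f)
    {G : E n → E n → E n} (hG : IsDirectionalSubgradient n f G)
    {X : ℝ → E n} {s : ℝ} {v : E n} (hX : HasDerivAt X v s) :
    Tendsto (slope (fun t => f (X t)) s) (𝓝[>] s) (𝓝 (inner ℝ (G (X s) v) v : ℝ)) := by
  set c : ℝ := inner ℝ (G (X s) v) v with hc
  have hslopeX : Tendsto (slope X s) (𝓝[>] s) (𝓝 v) :=
    (hasDerivAt_iff_tendsto_slope.1 hX).mono_left
      (nhdsWithin_mono _ (fun z hz => ne_of_gt hz))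
  rw [tendsto_order]
  constructor
  · -- lower bound
    intro a ha
    have hlow : Tendsto (fun z => (inner ℝ (G (X s) v) (slope X s z) : ℝ)) (𝓝[>] s) (𝓝 c) :=
      tendsto_const_nhds.inner hslopeX
    filter_upwards [hlow.eventually_const_lt ha, self_mem_nhdsWithin] with z h1 h2
    exact lt_of_lt_of_le h1 (subgrad_slope_le h2 (hG (X s) v).1)
  · -- upper bound: contradiction / compactness
    intro a ha
    by_contra hcon
    rw [not_eventually] at hcon
    -- extract a sequence
    have hseq : ∀ k : ℕ, ∃ z, z ∈ Ioo s (s + 1/(k+1)) ∧ a ≤ slope (fun t => f (X t)) s z := by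
      intro k
      have hU : Ioo s (s + 1/(k+1)) ∈ 𝓝[>] s :=
        Ioo_mem_nhdsGT_of_mem ⟨le_rfl, lt_add_of_pos_right s (by positivity)⟩
      obtain ⟨z, hz1, hz2⟩ := (hcon.and_eventually (eventually_mem_set.2 hU)).exists
      exact ⟨z, hz2, not_lt.1 hz1⟩
    choose z hz1 hz2 using hseq
    have hztend : Tendsto z atTop (𝓝 s) := by
      have h1 : Tendsto (fun k : ℕ => s + 1/(k+1 : ℝ)) atTop (𝓝 s) := by
        have := tendsto_one_div_add_atTop_nhds_zero_nat (𝕜 := ℝ)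
        simpa using tendsto_const_nhds.add this
      exact tendsto_of_tendsto_of_tendsto_of_le_of_le tendsto_const_nhds h1
        (fun k => (hz1 k).1.le) (fun k => (hz1 k).2.le)
    have hztend' : Tendsto z atTop (𝓝[>] s) :=
      tendsto_nhdsWithin_of_tendsto_nhds_of_eventually_within _ hztend
        (Eventually.of_forall fun k => (hz1 k).1)
    have hXz : Tendsto (fun k => X (z k)) atTop (𝓝 (X s)) :=
      (hX.continuousAt.tendsto).comp hztend
    obtain ⟨K, hK⟩ := subgrad_norm_bound fcont (X s)
    have hball : ∀ᶠ k in atTop, X (z k) ∈ Metric.closedBall (X s) 1 := by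
      have := hXz (Metric.closedBall_mem_nhds (X s) (by norm_num : (0:ℝ) < 1))
      exact this
    obtain ⟨N, hN⟩ := eventually_atTop.1 hball
    set u : ℕ → E n := fun k => G (X (z (k + N))) v with hu
    have huball : ∀ k, u k ∈ Metric.closedBall (0 : E n) K := by
      intro k
      rw [Metric.mem_closedBall, dist_zero_right]
      exact hK _ (hN _ (Nat.le_add_left N k)) _ (hG (X (z (k + N))) v).1
    obtain ⟨ξ, hξball, σ, hσ, hσtend⟩ :=
      (isCompact_closedBall (0 : E n) K).tendsto_subseq huball
    set w : ℕ → ℝ := fun k => z (σ k + N) with hw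
    have hwtend : Tendsto w atTop (𝓝[>] s) :=
      hztend'.comp ((tendsto_add_atTop_nat N).comp hσ.tendsto_atTop)
    have hXw : Tendsto (fun k => X (w k)) atTop (𝓝 (X s)) :=
      (hX.continuousAt.tendsto).comp (hwtend.mono_right nhdsWithin_le_nhds)
    -- ξ is a subgradient at X s
    have hξsub : IsSubgradientAt n f (X s) ξ := by
      intro y
      have hk : ∀ k, f (X (w k)) + (inner ℝ (u (σ k)) (y - X (w k)) : ℝ) ≤ f y :=
        fun k => (hG (X (w k)) v).1 y
      have htend : Tendsto (fun k => f (X (w k)) + (inner ℝ (u (σ k)) (y - X (w k)) : ℝ))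
          atTop (𝓝 (f (X s) + (inner ℝ ξ (y - X s) : ℝ))) := by
        exact ((fcont.continuousAt.tendsto).comp hXw).add
          (hσtend.inner (tendsto_const_nhds.sub hXw))
      exact le_of_tendsto htend (Eventually.of_forall hk)
    have hmax : (inner ℝ ξ v : ℝ) ≤ c := (hG (X s) v).2 ξ hξsub
    -- but along the sequence the slopes are ≥ a > c
    have hslopew : Tendsto (fun k => slope X s (w k)) atTop (𝓝 v) := by
      refine (hslopeX.comp hwtend)
    have hinner : Tendsto (fun k => (inner ℝ (u (σ k)) (slope X s (w k)) : ℝ)) atTop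
        (𝓝 (inner ℝ ξ v : ℝ)) := hσtend.inner hslopew
    have hge : ∀ k, a ≤ (inner ℝ (u (σ k)) (slope X s (w k)) : ℝ) := by
      intro k
      exact le_trans (hz2 _) (slope_le_of_subgrad (hz1 _).1 (hG (X (w k)) v).1)
    have : a ≤ (inner ℝ ξ v : ℝ) := le_of_tendsto_of_tendsto' tendsto_const_nhds hinner hge
    linarith

/-- **Theorem (composite/non-smooth case).** If `f` is convex with minimizer `x⋆`, `G` is a
directional subgradient of `f`, and `X` solves `Ẍ + (3/t)Ẋ + G(X, Ẋ) = 0` on `[0,α)` with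
`X(0) = x₀`, `Ẋ(0) = 0`, then `f(X(t)) - f⋆ ≤ 2‖x₀ - x⋆‖²/t²` for `0 < t < α`. -/
theorem nonsmooth_ode_rate (n : ℕ) (f : E n → ℝ) (hconv : ConvexOn ℝ Set.univ f)
    (xstar : E n) (hmin : IsMinOn f Set.univ xstar)
    (G : E n → E n → E n) (hG : IsDirectionalSubgradient n f G)
    (α : ℝ) (hα : 0 < α) (x0 : E n) (X : ℝ → E n)
    (hX : NonsmoothNesterovSol n G x0 α X) :
    ∀ t ∈ Set.Ioo (0:ℝ) α, f (X t) - f xstar ≤ 2 * ‖x0 - xstar‖ ^ 2 / t ^ 2 := by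
  obtain ⟨hX0, hC1, hd0, hode⟩ := hX
  have fcont : Continuous f := by
    rw [← continuousOn_univ]
    exact hconv.continuousOn isOpen_univ
  set φ : ℝ → ℝ := fun t => f (X t) - f xstar with hφdef
  set Y : ℝ → E n := derivWithin X (Set.Ico 0 α) with hYdef
  set Efun : ℝ → ℝ := fun t => t^2 * φ t + 2 * ‖X t + (t/2) • Y t - xstar‖^2 with hEdef
  have hUD : UniqueDiffOn ℝ (Ico (0:ℝ) α) := uniqueDiffOn_Ico 0 α
  have contX : ContinuousOn X (Ico 0 α) := hC1.continuousOn
  have contY : ContinuousOn Y (Ico 0 α) := hC1.continuousOn_derivWithin hUD le_rfl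
  have contE : ContinuousOn Efun (Ico 0 α) := by
    apply ContinuousOn.add
    · exact ((continuous_pow 2).continuousOn).mul
        ((fcont.comp_continuousOn contX).sub continuousOn_const)
    · have hW : ContinuousOn (fun t => X t + (t/2) • Y t - xstar) (Ico (0:ℝ) α) :=
        (contX.add ((continuousOn_id.div_const 2).smul contY)).sub continuousOn_const
      exact continuousOn_const.mul (hW.norm.pow 2)
  -- key limit of the slope of Efun at interior points
  have key : ∀ s ∈ Ioo (0:ℝ) α, ∃ L ≤ 0, Tendsto (slope Efun s) (𝓝[>] s) (𝓝 L) := by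
    intro s hs
    have hs0 : (0:ℝ) < s := hs.1
    have hmem : Ico (0:ℝ) α ∈ 𝓝 s :=
      Filter.mem_of_superset (isOpen_Ioo.mem_nhds hs) Ioo_subset_Ico_self
    set v : E n := deriv X s with hv
    set g : E n := G (X s) v with hg
    have hXd : HasDerivAt X v s := by
      have h := (hC1.differentiableOn one_ne_zero) s ⟨hs.1.le, hs.2⟩
      have h2 := h.differentiableAt hmem
      exact h2.hasDerivAt
    have hdd : DifferentiableAt ℝ (deriv X) s := (hode s hs).1
    set a2 : E n := deriv (deriv X) s with ha2def
    have ha2 : a2 = -((3/s) • v + g) := by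
      have h0 : a2 + ((3/s) • deriv X s + G (X s) (deriv X s)) = 0 := by
        rw [← add_assoc]; exact (hode s hs).2
      exact eq_neg_of_add_eq_zero_left h0
    -- derivative of the W-term
    set w' : E n := v + ((s/2) • a2 + ((1:ℝ)/2) • v) with hw'def
    have hW : HasDerivAt (fun t => X t + (t/2) • deriv X t - xstar) w' s := by
      have h1 : HasDerivAt (fun t : ℝ => t/2) ((1:ℝ)/2) s := (hasDerivAt_id s).div_const 2
      exact (hXd.add (h1.smul hdd.hasDerivAt)).sub_const xstar
    set Wc : E n := X s + (s/2) • v - xstar with hWc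
    
    have hw' : w' = -((s/2) • g) := by
      rw [hw'def, ha2]
      have hs0' : s ≠ 0 := ne_of_gt hs0
      match_scalars <;> (field_simp; try ring)
    set Bfun : ℝ → ℝ := fun t => 2 * ‖X t + (t/2) • deriv X t - xstar‖^2 with hBdef
    have hB : HasDerivAt Bfun (2*((inner ℝ Wc w' : ℝ) + (inner ℝ w' Wc : ℝ))) s := by
      have hin : HasDerivAt
          (fun t => (inner ℝ (X t + (t/2) • deriv X t - xstar)
            (X t + (t/2) • deriv X t - xstar) : ℝ))
          ((inner ℝ Wc w' : ℝ) + (inner ℝ w' Wc : ℝ)) s := HasDerivAt.inner ℝ hW hW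
      have h2 := hin.const_mul 2
      refine HasDerivAt.congr_of_eventuallyEq h2 ?_
      filter_upwards with t
      rw [real_inner_self_eq_norm_sq]
    have hslopeB : Tendsto (slope Bfun s) (𝓝[>] s) (𝓝 (2*((inner ℝ Wc w' : ℝ) + (inner ℝ w' Wc : ℝ)))) :=
      (hasDerivAt_iff_tendsto_slope.1 hB).mono_left
        (nhdsWithin_mono _ (fun z hz => ne_of_gt hz))
    set c : ℝ := inner ℝ g v with hc
    have hslopeφ : Tendsto (slope φ s) (𝓝[>] s) (𝓝 c) := by
      have h := slope_comp_tendsto fcont hG hXd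
      have heq : slope φ s = slope (fun t => f (X t)) s := by
        funext z
        simp only [slope_def_field, hφdef]
        ring
      rw [heq]; exact h
    set b' : ℝ := 2*((inner ℝ Wc w' : ℝ) + (inner ℝ w' Wc : ℝ)) with hb'
    set L : ℝ := s^2 * c + (s+s) * φ s + b' with hL
    refine ⟨L, ?_, ?_⟩
    · -- L ≤ 0
      have hinner : (inner ℝ Wc w' : ℝ) = -(s/2) * (inner ℝ Wc g : ℝ) := by
        rw [hw', inner_neg_right, real_inner_smul_right]; ring
      have hinner2 : (inner ℝ w' Wc : ℝ) = -(s/2) * (inner ℝ Wc g : ℝ) := by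
        rw [real_inner_comm]; exact hinner
      have hWcg : (inner ℝ Wc g : ℝ) = (inner ℝ (X s - xstar) g : ℝ) + (s/2) * (inner ℝ v g : ℝ) := by
        have : Wc = (X s - xstar) + (s/2) • v := by rw [hWc]; abel
        rw [this, inner_add_left, real_inner_smul_left]
      have hcvg : c = (inner ℝ v g : ℝ) := real_inner_comm v g
      have hsub : φ s ≤ (inner ℝ (X s - xstar) g : ℝ) := by
        have h := (hG (X s) v).1 xstar
        have heq : (inner ℝ g (xstar - X s) : ℝ) = -(inner ℝ (X s - xstar) g : ℝ) := by
          rw [real_inner_comm, ← inner_neg_left]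
          congr 1; abel
        rw [heq] at h
        simp only [hφdef]
        linarith
      have : L = (s+s) * (φ s - (inner ℝ (X s - xstar) g : ℝ)) := by
        rw [hL, hb', hinner, hinner2, hWcg, hcvg]; ring
      rw [this]
      apply mul_nonpos_of_nonneg_of_nonpos
      · linarith
      · linarith
    · -- the slope tends to L
      have hev : ∀ᶠ z in 𝓝[>] s, slope Efun s z
          = z^2 * slope φ s z + (z + s) * φ s + slope Bfun s z := by
        have hIoo : Ioo s α ∈ 𝓝[>] s := Ioo_mem_nhdsGT_of_mem ⟨le_rfl, hs.2⟩
        filter_upwards [hIoo] with z hz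
        have hzmem : z ∈ Ioo (0:ℝ) α := ⟨lt_trans hs0 hz.1, hz.2⟩
        have hYz : Y z = deriv X z := derivWithin_of_mem_nhds
          (Filter.mem_of_superset (isOpen_Ioo.mem_nhds hzmem) Ioo_subset_Ico_self)
        have hYs : Y s = deriv X s := derivWithin_of_mem_nhds hmem
        have hEz : Efun z = z^2 * φ z + Bfun z := by rw [hEdef, hBdef]; simp only [hYz]
        have hEs : Efun s = s^2 * φ s + Bfun s := by rw [hEdef, hBdef]; simp only [hYs]
        have hzs : z - s ≠ 0 := sub_ne_zero.2 (ne_of_gt hz.1)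
        simp only [slope_def_field]
        rw [hEz, hEs]
        field_simp
        ring
      have hlim : Tendsto (fun z => z^2 * slope φ s z + (z + s) * φ s + slope Bfun s z)
          (𝓝[>] s) (𝓝 L) := by
        have h1 : Tendsto (fun z : ℝ => z^2) (𝓝[>] s) (𝓝 (s^2)) :=
          ((continuous_pow 2).tendsto s).mono_left nhdsWithin_le_nhds
        have h2 : Tendsto (fun z : ℝ => z + s) (𝓝[>] s) (𝓝 (s+s)) :=
          ((continuous_id.add continuous_const).tendsto s).mono_left nhdsWithin_le_nhds
        exact ((h1.mul hslopeφ).add (h2.mul tendsto_const_nhds)).add hslopeB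
      exact hlim.congr' (by filter_upwards [hev] with z h using h.symm)
  -- monotonicity and conclusion
  intro t ht
  have hmono : ∀ a ∈ Ioo (0:ℝ) t, Efun t ≤ Efun a := by
    intro a ha
    have hIcc : Icc a t ⊆ Ico (0:ℝ) α := fun x hx =>
      ⟨le_trans ha.1.le hx.1, lt_of_le_of_lt hx.2 ht.2⟩
    have hbound : ∀ x ∈ Ico a t, ∀ r, (0:ℝ) < r →
        ∃ᶠ z in 𝓝[>] x, slope Efun x z < r := by
      intro x hx r hr
      have hxI : x ∈ Ioo (0:ℝ) α := ⟨lt_of_lt_of_le ha.1 hx.1, lt_trans hx.2 ht.2⟩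
      obtain ⟨L, hL, hT⟩ := key x hxI
      exact (hT.eventually_lt_const (lt_of_le_of_lt hL hr)).frequently
    have := image_le_of_liminf_slope_right_le_deriv_boundary (f := Efun)
      (a := a) (b := t) (contE.mono hIcc) (B := fun _ => Efun a) (B' := fun _ => 0)
      le_rfl continuousOn_const (fun x _ => hasDerivWithinAt_const x _ (Efun a)) hbound
    exact this (right_mem_Icc.2 ha.2.le)
  have hE0 : Efun 0 = 2 * ‖x0 - xstar‖^2 := by
    simp [hEdef, hX0]
  have hcont0 : Tendsto Efun (𝓝[>] (0:ℝ)) (𝓝 (Efun 0)) := by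
    have h := contE 0 ⟨le_rfl, hα⟩
    have h2 : Tendsto Efun (𝓝[Ioo (0:ℝ) α] 0) (𝓝 (Efun 0)) :=
      h.mono_left (nhdsWithin_mono _ Ioo_subset_Ico_self)
    rwa [nhdsWithin_Ioo_eq_nhdsGT hα] at h2
  have hfin : Efun t ≤ Efun 0 := by
    refine ge_of_tendsto hcont0 ?_
    filter_upwards [Ioo_mem_nhdsGT_of_mem ⟨le_rfl, ht.1⟩] with a ha using hmono a ha
  have ht2 : (0:ℝ) < t^2 := pow_pos ht.1 2
  have hEt : t^2 * φ t ≤ 2 * ‖x0 - xstar‖^2 := by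
    have hnorm : 0 ≤ 2*‖X t + (t/2) • Y t - xstar‖^2 := by positivity
    calc t^2 * φ t ≤ Efun t := by rw [hEdef]; linarith
    _ ≤ Efun 0 := hfin
    _ = 2 * ‖x0 - xstar‖^2 := hE0
  have hEt' : t ^ 2 * (f (X t) - f xstar) ≤ 2 * ‖x0 - xstar‖ ^ 2 := hEt
  rw [le_div_iff₀ ht2]
  linarith
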